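/- The generating function identity ∑_{N≥0} p(2N - 1, 4, N) z^N = z / ((1-z)^2 (1-z^2)(1-z^3)) holds as an identity of formal power series. -/

import Mathlib

/-- `pBdd n m N` is the number of partitions of `n` into at most `m` parts,
each part at most `N`; it is `0` for negative `n`. -/
noncomputable def pBdd (n : ℤ) (m N : ℕ) : ℕ :=
  if 0 ≤ n then
    Nat.card {π : Nat.Partition n.toNat //
      Multiset.card π.parts ≤ m ∧ ∀ i ∈ π.parts, i ≤ N}
  else 0

/-- `pAtMost n m` is the number of partitions of `n` into at most `m` parts;
it is `0` for negative `n`. -/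
noncomputable def pAtMost (n : ℤ) (m : ℕ) : ℕ :=
  if 0 ≤ n then
    Nat.card {π : Nat.Partition n.toNat // Multiset.card π.parts ≤ m}
  else 0

open PowerSeries Finset

namespace Stmt6Aux

def W4 (m : ℕ) : Finset (ℕ × ℕ × ℕ × ℕ) :=
  ((range (m+1)) ×ˢ (range (m+1)) ×ˢ (range (m+1)) ×ˢ (range (m+1))).filter
    fun q => q.1 + q.2.1 + 2*q.2.2.1 + 3*q.2.2.2 = m

def W3 (m : ℕ) : Finset (ℕ × ℕ × ℕ) :=
  ((range (m+1)) ×ˢ (range (m+1)) ×ˢ (range (m+1))).filter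
    fun q => q.1 + q.2.1 + 2*q.2.2 = m

def W2 (m : ℕ) : Finset (ℕ × ℕ) :=
  ((range (m+1)) ×ˢ (range (m+1))).filter fun q => q.1 + q.2 = m

def XF (N : ℕ) : Finset (ℕ × ℕ × ℕ × ℕ) :=
  ((range (N+1)) ×ˢ (range (N+1)) ×ˢ (range (N+1)) ×ˢ (range (N+1))).filter
    fun x => x.2.1 ≤ x.1 ∧ x.2.2.1 ≤ x.2.1 ∧ x.2.2.2 ≤ x.2.2.1 ∧
      x.1 + x.2.1 + x.2.2.1 + x.2.2.2 + 1 = 2*N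

lemma mem_W4 {m : ℕ} {q : ℕ × ℕ × ℕ × ℕ} :
    q ∈ W4 m ↔ q.1 + q.2.1 + 2*q.2.2.1 + 3*q.2.2.2 = m := by
  simp only [W4, mem_filter, mem_product, mem_range]; omega

lemma mem_W3 {m : ℕ} {q : ℕ × ℕ × ℕ} :
    q ∈ W3 m ↔ q.1 + q.2.1 + 2*q.2.2 = m := by
  simp only [W3, mem_filter, mem_product, mem_range]; omega

lemma mem_W2 {m : ℕ} {q : ℕ × ℕ} : q ∈ W2 m ↔ q.1 + q.2 = m := by
  simp only [W2, mem_filter, mem_product, mem_range]; omega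

lemma mem_XF {N : ℕ} {x : ℕ × ℕ × ℕ × ℕ} :
    x ∈ XF N ↔ x.2.1 ≤ x.1 ∧ x.2.2.1 ≤ x.2.1 ∧ x.2.2.2 ≤ x.2.2.1 ∧
      x.1 + x.2.1 + x.2.2.1 + x.2.2.2 + 1 = 2*N ∧ x.1 ≤ N := by
  simp only [XF, mem_filter, mem_product, mem_range]; omega

lemma R4 (m : ℕ) :
    (W4 m).card = (W3 m).card + (if 3 ≤ m then (W4 (m-3)).card else 0) := by
  rw [← Finset.card_filter_add_card_filter_not
    (s := W4 m) (p := fun q => q.2.2.2 = 0)]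
  congr 1
  · apply Finset.card_nbij (fun q => (q.1, q.2.1, q.2.2.1))
    · intro q hq
      obtain ⟨a,b,c,d⟩ := q
      simp only [mem_coe, mem_filter, mem_W4] at hq
      simp only [mem_coe, mem_W3]
      omega
    · intro q hq q' hq' h
      obtain ⟨a, b, c, d⟩ := q
      obtain ⟨a', b', c', d'⟩ := q'
      simp only [mem_coe, coe_filter, Set.mem_setOf_eq, mem_W4] at hq hq'
      simp only [Prod.mk.injEq] at h ⊢
      omega
    · intro y hy
      obtain ⟨a,b,c⟩ := y
      simp only [mem_coe, mem_W3] at hy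
      refine ⟨(a, b, c, 0), ?_, rfl⟩
      simp only [Set.mem_setOf_eq, coe_filter, mem_coe, mem_filter, mem_W4]
      exact ⟨by omega, trivial⟩
  · split_ifs with h
    · apply Finset.card_nbij (fun q => (q.1, q.2.1, q.2.2.1, q.2.2.2 - 1))
      · intro q hq
        obtain ⟨a,b,c,d⟩ := q
        simp only [mem_coe, mem_filter, mem_W4] at hq
        simp only [mem_coe, mem_W4]
        omega
      · intro q hq q' hq' hE
        obtain ⟨a, b, c, d⟩ := q
        obtain ⟨a', b', c', d'⟩ := q'
        simp only [mem_coe, coe_filter, Set.mem_setOf_eq, mem_W4] at hq hq'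
        simp only [Prod.mk.injEq] at hE ⊢
        omega
      · intro y hy
        obtain ⟨a,b,c,d⟩ := y
        simp only [mem_coe, mem_W4] at hy
        refine ⟨(a, b, c, d + 1), ?_, ?_⟩
        · simp only [Set.mem_setOf_eq, coe_filter, mem_coe, mem_filter, mem_W4]
          exact ⟨by omega, by omega⟩
        · simp
    · have he : (W4 m).filter (fun q => ¬ q.2.2.2 = 0) = ∅ := by
        rw [Finset.filter_eq_empty_iff]
        intro q hq
        rw [mem_W4] at hq
        omega
      simp [he]

lemma R3 (m : ℕ) :
    (W3 m).card = (W2 m).card + (if 2 ≤ m then (W3 (m-2)).card else 0) := by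
  rw [← Finset.card_filter_add_card_filter_not
    (s := W3 m) (p := fun q => q.2.2 = 0)]
  congr 1
  · apply Finset.card_nbij (fun q => (q.1, q.2.1))
    · intro q hq
      obtain ⟨a,b,c⟩ := q
      simp only [mem_coe, mem_filter, mem_W3] at hq
      simp only [mem_coe, mem_W2]
      omega
    · intro q hq q' hq' h
      obtain ⟨a, b, c⟩ := q
      obtain ⟨a', b', c'⟩ := q'
      simp only [mem_coe, coe_filter, Set.mem_setOf_eq, mem_W3] at hq hq'
      simp only [Prod.mk.injEq] at h ⊢
      omega
    · intro y hy
      obtain ⟨a,b⟩ := y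
      simp only [mem_coe, mem_W2] at hy
      refine ⟨(a, b, 0), ?_, rfl⟩
      simp only [Set.mem_setOf_eq, coe_filter, mem_coe, mem_filter, mem_W3]
      exact ⟨by omega, trivial⟩
  · split_ifs with h
    · apply Finset.card_nbij (fun q => (q.1, q.2.1, q.2.2 - 1))
      · intro q hq
        obtain ⟨a,b,c⟩ := q
        simp only [mem_coe, mem_filter, mem_W3] at hq
        simp only [mem_coe, mem_W3]
        omega
      · intro q hq q' hq' hE
        obtain ⟨a, b, c⟩ := q
        obtain ⟨a', b', c'⟩ := q'
        simp only [mem_coe, coe_filter, Set.mem_setOf_eq, mem_W3] at hq hq'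
        simp only [Prod.mk.injEq] at hE ⊢
        omega
      · intro y hy
        obtain ⟨a,b,c⟩ := y
        simp only [mem_coe, mem_W3] at hy
        refine ⟨(a, b, c + 1), ?_, ?_⟩
        · simp only [Set.mem_setOf_eq, coe_filter, mem_coe, mem_filter, mem_W3]
          exact ⟨by omega, by omega⟩
        · simp
    · have he : (W3 m).filter (fun q => ¬ q.2.2 = 0) = ∅ := by
        rw [Finset.filter_eq_empty_iff]
        intro q hq
        rw [mem_W3] at hq
        omega
      simp [he]

lemma R2 (m : ℕ) : (W2 m).card = m + 1 := by
  rw [show m + 1 = (range (m+1)).card by simp]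
  apply Finset.card_nbij (fun q => q.1)
  · intro q hq
    obtain ⟨a,b⟩ := q
    simp only [mem_coe, mem_W2] at hq
    simp only [mem_coe, mem_range]
    omega
  · intro q hq q' hq' h
    obtain ⟨a, b⟩ := q
    obtain ⟨a', b'⟩ := q'
    simp only [mem_coe, mem_W2] at hq hq'
    simp only [Prod.mk.injEq]
    simp only at h
    omega
  · intro y hy
    simp only [mem_coe, mem_range] at hy
    refine ⟨(y, m - y), ?_, rfl⟩
    simp only [mem_coe, mem_W2]
    omega

lemma gen (c c' : ℕ → ℤ) (w : ℕ)
    (h : ∀ m, c m - (if w ≤ m then c (m - w) else 0) = c' m) :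
    PowerSeries.mk c * (1 - X ^ w) = PowerSeries.mk c' := by
  ext n
  simp only [mul_sub, mul_one, map_sub, coeff_mul_X_pow', coeff_mk]
  exact h n

def h4 : ℕ → ℤ := fun m => ((W4 m).card : ℤ)
def h3 : ℕ → ℤ := fun m => ((W3 m).card : ℤ)
def h2 : ℕ → ℤ := fun m => ((W2 m).card : ℤ)

lemma S4 : PowerSeries.mk h4 * (1 - X ^ 3) = PowerSeries.mk h3 := by
  apply gen
  intro m
  have := R4 m
  simp only [h4, h3]
  split_ifs with h
  · rw [this, if_pos h]; push_cast; ring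
  · rw [this, if_neg h]; push_cast; ring

lemma S3 : PowerSeries.mk h3 * (1 - X ^ 2) = PowerSeries.mk h2 := by
  apply gen
  intro m
  have := R3 m
  simp only [h3, h2]
  split_ifs with h
  · rw [this, if_pos h]; push_cast; ring
  · rw [this, if_neg h]; push_cast; ring

lemma S2 : PowerSeries.mk h2 * (1 - X ^ 1) = PowerSeries.mk (fun _ => (1 : ℤ)) := by
  apply gen
  intro m
  simp only [h2, R2]
  split_ifs with h <;> push_cast <;> omega

lemma S1 : PowerSeries.mk (fun _ => (1 : ℤ)) * (1 - X ^ 1) = 1 := by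
  have h1 := gen (fun _ => (1 : ℤ)) (fun m => if m = 0 then 1 else 0) 1
    (by intro m; by_cases hm : m = 0 <;> simp [hm, Nat.one_le_iff_ne_zero])
  rw [h1]
  ext n
  rw [coeff_mk, coeff_one]

lemma key : PowerSeries.mk h4 * ((1 - X) ^ 2 * (1 - X ^ 2) * (1 - X ^ 3)) = 1 := by
  have hpoly : ((1 - X : ℤ⟦X⟧) ^ 2 * (1 - X ^ 2) * (1 - X ^ 3)) =
      (1 - X ^ 3) * ((1 - X ^ 2) * ((1 - X ^ 1) * (1 - X ^ 1))) := by
    rw [pow_one, sq, mul_comm ((1 - X : ℤ⟦X⟧) * (1 - X) * (1 - X ^ 2)) (1 - X ^ 3),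
      mul_comm ((1 - X : ℤ⟦X⟧) * (1 - X)) (1 - X ^ 2)]
  rw [hpoly, ← mul_assoc, ← mul_assoc, ← mul_assoc, S4, S3, S2, S1]

lemma L2 (N : ℕ) (hN : 1 ≤ N) : (W4 (N-1)).card = (XF N).card := by
  apply Finset.card_nbij (fun q => if q.2.1 ≤ q.1 then
      (q.1+q.2.1+q.2.2.1+3*q.2.2.2+1, q.1+q.2.2.1+q.2.2.2, q.2.1+q.2.2.1+q.2.2.2,
        q.2.2.1+q.2.2.2)
    else (q.1+q.2.1+q.2.2.1+2*q.2.2.2, q.2.1+q.2.2.1+2*q.2.2.2, q.1+q.2.2.1+2*q.2.2.2+1,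
        q.2.2.1))
  · intro q hq
    obtain ⟨i,j,k,l⟩ := q
    simp only [mem_coe, mem_W4] at hq
    try dsimp only
    split_ifs with hij <;> simp only [mem_coe, mem_XF] <;> (try dsimp only) <;>
      and_intros <;> (try trivial) <;> omega
  · intro q hq q' hq' h
    obtain ⟨i,j,k,l⟩ := q
    obtain ⟨i',j',k',l'⟩ := q'
    simp only [mem_coe, mem_W4] at hq hq'
    dsimp only at hq hq' h
    split_ifs at h with h1 h2 h2 <;> simp only [Prod.mk.injEq] at h ⊢ <;> omega
  · intro x hx
    obtain ⟨a,b,c,d⟩ := x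
    simp only [mem_coe, mem_XF] at hx
    try dsimp only at hx
    by_cases hc : N - a ≤ d
    · refine ⟨(b - d, c - d, N - a, d - (N - a)), by simp only [mem_coe, mem_W4]; omega, ?_⟩
      (try dsimp only)
      split_ifs with h <;> simp only [Prod.mk.injEq] <;>
        and_intros <;> (try trivial) <;> omega
    · refine ⟨(a - b, a - c + 1, d, N - 1 - a - d), by simp only [mem_coe, mem_W4]; omega, ?_⟩
      (try dsimp only)
      split_ifs with h <;> simp only [Prod.mk.injEq] <;>
        and_intros <;> (try trivial) <;> omega

lemma sum_filter_ne_zero (l : List ℕ) : (l.filter (fun a => a ≠ 0)).sum = l.sum := by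
  induction l with
  | nil => rfl
  | cons a t ih =>
    rw [List.filter_cons]
    by_cases h : a = 0
    · subst h; simpa using ih
    · simp only [h, decide_not, ne_eq, decide_eq_true_eq, if_pos, List.sum_cons,
        Bool.not_eq_true', decide_eq_false_iff_not, not_false_iff, ite_true]
      simp only [ne_eq, decide_not] at ih
      omega

lemma tuple_spec (l : List ℕ) (hs : l.Pairwise (· ≥ ·)) (hlen : l.length ≤ 4)
    (hpos : ∀ a ∈ l, a ≠ 0) :
    ([l.getD 0 0, l.getD 1 0, l.getD 2 0, l.getD 3 0].filter (fun a => a ≠ 0)) = l ∧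
    l.getD 1 0 ≤ l.getD 0 0 ∧ l.getD 2 0 ≤ l.getD 1 0 ∧ l.getD 3 0 ≤ l.getD 2 0 ∧
    l.getD 0 0 + l.getD 1 0 + l.getD 2 0 + l.getD 3 0 = l.sum := by
  rcases l with _|⟨a, _|⟨b, _|⟨c, _|⟨d, _|⟨e,t⟩⟩⟩⟩⟩
  · simp
  · simp_all [List.pairwise_cons]
  · simp_all [List.pairwise_cons]
  · simp_all [List.pairwise_cons]; omega
  · simp_all [List.pairwise_cons]; omega
  · simp at hlen; omega

lemma getD_filter (x0 x1 x2 x3 : ℕ) (h01 : x1 ≤ x0) (h12 : x2 ≤ x1) (h23 : x3 ≤ x2) :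
    (([x0,x1,x2,x3].filter (fun a => a ≠ 0)).getD 0 0 = x0) ∧
    (([x0,x1,x2,x3].filter (fun a => a ≠ 0)).getD 1 0 = x1) ∧
    (([x0,x1,x2,x3].filter (fun a => a ≠ 0)).getD 2 0 = x2) ∧
    (([x0,x1,x2,x3].filter (fun a => a ≠ 0)).getD 3 0 = x3) := by
  by_cases e0 : x0 = 0 <;> by_cases e1 : x1 = 0 <;> by_cases e2 : x2 = 0 <;>
    by_cases e3 : x3 = 0 <;> simp_all <;> omega

def toTup {M : ℕ} (π : Nat.Partition M) : ℕ × ℕ × ℕ × ℕ :=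
  ((Multiset.sort π.parts (· ≥ ·)).getD 0 0, (Multiset.sort π.parts (· ≥ ·)).getD 1 0,
   (Multiset.sort π.parts (· ≥ ·)).getD 2 0, (Multiset.sort π.parts (· ≥ ·)).getD 3 0)

lemma L1 (N : ℕ) (hN : 1 ≤ N) :
    Nat.card {π : Nat.Partition (2*N-1) //
      Multiset.card π.parts ≤ 4 ∧ ∀ i ∈ π.parts, i ≤ N} = (XF N).card := by
  rw [← Nat.card_eq_finsetCard (XF N)]
  have spec : ∀ π : Nat.Partition (2*N-1), Multiset.card π.parts ≤ 4 →
      (∀ i ∈ π.parts, i ≤ N) →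
      toTup π ∈ XF N ∧
      π.parts = (([toTup π |>.1, toTup π |>.2.1, toTup π |>.2.2.1,
        toTup π |>.2.2.2].filter (fun a => a ≠ 0) : List ℕ) : Multiset ℕ) := by
    intro π hcard hbdd
    set l := Multiset.sort π.parts (· ≥ ·) with hl
    have hcoe : (l : Multiset ℕ) = π.parts := Multiset.sort_eq _ _
    have hsort : l.Pairwise (· ≥ ·) := Multiset.pairwise_sort _ _
    have hlen : l.length ≤ 4 := by rw [Multiset.length_sort]; exact hcard
    have hpos : ∀ a ∈ l, a ≠ 0 := by
      intro a ha
      have : a ∈ π.parts := by rw [← hcoe]; exact_mod_cast ha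
      exact (π.parts_pos this).ne'
    have hsum : l.sum = 2*N-1 := by
      rw [← Multiset.sum_coe, hcoe]; exact π.parts_sum
    obtain ⟨hfil, h01, h12, h23, hadd⟩ := tuple_spec l hsort hlen hpos
    have hx0 : l.getD 0 0 ≤ N := by
      by_cases h0 : l.getD 0 0 = 0
      · omega
      · have : l.getD 0 0 ∈ ([l.getD 0 0, l.getD 1 0, l.getD 2 0, l.getD 3 0].filter
            (fun a => a ≠ 0)) :=
          List.mem_filter.mpr ⟨List.mem_cons_self, by simpa using h0⟩
        rw [hfil] at this
        apply hbdd
        rw [← hcoe]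
        exact_mod_cast this
    constructor
    · rw [mem_XF]
      simp only [toTup, ← hl]
      exact ⟨h01, h12, h23, by omega, hx0⟩
    · rw [← hcoe]
      simp only [toTup, ← hl]
      exact_mod_cast congrArg _ hfil.symm
  apply Nat.card_eq_of_bijective
    (fun π => (⟨toTup π.1, (spec π.1 π.2.1 π.2.2).1⟩ : {x // x ∈ XF N}))
  constructor
  · rintro ⟨π, hπ⟩ ⟨π', hπ'⟩ h
    simp only [Subtype.mk.injEq] at h
    apply Subtype.ext
    apply Nat.Partition.ext
    rw [(spec π hπ.1 hπ.2).2, (spec π' hπ'.1 hπ'.2).2, h]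
  · rintro ⟨⟨a,b,c,d⟩, hx⟩
    have hx' := hx
    rw [mem_XF] at hx'
    dsimp only at hx'
    obtain ⟨hba, hcb, hdc, hsum, haN⟩ := hx'
    have hsort4 : ([a,b,c,d] : List ℕ).Pairwise (· ≥ ·) := by
      simp [List.pairwise_cons]
      omega
    refine ⟨⟨⟨(([a,b,c,d].filter (fun a => a ≠ 0) : List ℕ) : Multiset ℕ), ?_, ?_⟩, ?_, ?_⟩, ?_⟩
    · intro i hi
      simp only [Multiset.mem_coe, List.mem_filter] at hi
      simp only [ne_eq, decide_not] at hi
      have := hi.2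
      simp at this
      omega
    · rw [Multiset.sum_coe, sum_filter_ne_zero]
      simp; omega
    · simp only [Multiset.coe_card]
      calc ([a,b,c,d].filter (fun a => a ≠ 0)).length ≤ ([a,b,c,d] : List ℕ).length :=
            List.length_filter_le _ _
        _ = 4 := by simp
    · intro i hi
      simp only [Multiset.mem_coe, List.mem_filter] at hi
      have := hi.1
      simp at this
      rcases this with h|h|h|h <;> omega
    · apply Subtype.ext
      have hsortl : (Multiset.sort
          (([a,b,c,d].filter (fun a => a ≠ 0) : List ℕ) : Multiset ℕ) (· ≥ ·))
          = [a,b,c,d].filter (fun a => a ≠ 0) := by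
        apply List.Perm.eq_of_pairwise'
          (Multiset.pairwise_sort _ _) ?_
          (Multiset.coe_eq_coe.mp (Multiset.sort_eq _ _))
        exact hsort4.filter _
      obtain ⟨g0, g1, g2, g3⟩ := getD_filter a b c d hba hcb hdc
      simp only [toTup, hsortl, g0, g1, g2, g3]

lemma pBdd_eq (n : ℕ) : (pBdd (2*(((n+1 : ℕ)) : ℤ) - 1) 4 (n+1)) = (W4 n).card := by
  rw [pBdd, if_pos (by push_cast; omega)]
  have ht : ((2*(((n : ℕ)+1 : ℕ) : ℤ) - 1)).toNat = 2*(n+1) - 1 := by push_cast; omega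
  rw [show (((n+1 : ℕ)) : ℤ) = ((n : ℤ) + 1) by push_cast; ring] at ht ⊢
  rw [ht, L1 (n+1) (by omega), ← L2 (n+1) (by omega)]
  norm_num

end Stmt6Aux

open Stmt6Aux

/-- `∑_{N≥0} p(2N-1,4,N) z^N = z / ((1-z)^2 (1-z^2)(1-z^3))`. -/
theorem stmt6 :
    (PowerSeries.mk fun N : ℕ => (pBdd (2 * (N : ℤ) - 1) 4 N : ℤ)) *
      ((1 - X) ^ 2 * (1 - X ^ 2) * (1 - X ^ 3)) =
    X := by
  have hmk : (PowerSeries.mk fun N : ℕ => (pBdd (2 * (N : ℤ) - 1) 4 N : ℤ))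
      = X * PowerSeries.mk h4 := by
    ext n
    cases n with
    | zero =>
      rw [coeff_mk]
      have h0 : (coeff 0) (X * PowerSeries.mk h4) = 0 := by
        simp [PowerSeries.coeff_zero_eq_constantCoeff]
      rw [h0]
      norm_num [pBdd]
    | succ n =>
      rw [coeff_mk, coeff_succ_X_mul, coeff_mk]
      have := pBdd_eq n
      push_cast at this ⊢
      rw [this]
      rfl
  rw [hmk, mul_assoc, key, mul_one]
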